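/- Let A ⊆ Γ = F[x,y]/(x² + y⁴ − 1) be the subalgebra generated by 1, y², xy, and let M = xA + yA ⊆ Γ. Then M is an A-submodule of Γ that is not cyclic: there is no z ∈ M with M = zA. -/

import Mathlib

set_option synthInstance.maxHeartbeats 400000

open MvPolynomial

/-- The quotient ring `Γ = F[x,y]/(x² + y⁴ − 1)`. -/
abbrev Gam (F : Type*) [Field F] : Type _ :=
  MvPolynomial (Fin 2) F ⧸
    Ideal.span {(X 0 ^ 2 + X 1 ^ 4 - 1 : MvPolynomial (Fin 2) F)}

/-- The image of `x` in `Γ`. -/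
noncomputable abbrev xG (F : Type*) [Field F] : Gam F := Ideal.Quotient.mk _ (X 0)

/-- The image of `y` in `Γ`. -/
noncomputable abbrev yG (F : Type*) [Field F] : Gam F := Ideal.Quotient.mk _ (X 1)

/-- The subalgebra `A` of `Γ` generated by `1`, `y²`, `xy`. -/
noncomputable abbrev AG (F : Type*) [Field F] : Subalgebra F (Gam F) :=
  Algebra.adjoin F ({yG F ^ 2, xG F * yG F} : Set (Gam F))


set_option maxRecDepth 8000
set_option maxHeartbeats 1000000

namespace Stmt11Aux


variable (F : Type*) [Field F]

noncomputable def DD : Polynomial F := 1 - Polynomial.X ^ 4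

noncomputable def ff : Polynomial (Polynomial F) := Polynomial.X ^ 2 - Polynomial.C (DD F)

noncomputable abbrev RR : Type _ := AdjoinRoot (ff F)

noncomputable abbrev og : Polynomial F →+* RR F := AdjoinRoot.of (ff F)
noncomputable abbrev xi : RR F := AdjoinRoot.root (ff F)

lemma ff_monic : (ff F).Monic := Polynomial.monic_X_pow_sub_C _ (by norm_num)

lemma ff_degree : (ff F).degree = 2 := Polynomial.degree_X_pow_sub_C (by norm_num) _

lemma xi_sq : xi F ^ 2 = og F (DD F) := by
  have h := AdjoinRoot.eval₂_root (ff F)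
  rw [ff] at h
  simp only [Polynomial.eval₂_sub, Polynomial.eval₂_pow, Polynomial.eval₂_X, Polynomial.eval₂_C] at h
  exact sub_eq_zero.mp h

lemma coords_eq_zero {p q : Polynomial F} (h : og F p + og F q * xi F = 0) :
    p = 0 ∧ q = 0 := by
  have hmk : AdjoinRoot.mk (ff F) (Polynomial.C q * Polynomial.X + Polynomial.C p) = 0 := by
    rw [map_add, map_mul, AdjoinRoot.mk_C, AdjoinRoot.mk_C, AdjoinRoot.mk_X]
    rw [← h]; ring
  rw [AdjoinRoot.mk_eq_zero] at hmk
  have h0 : Polynomial.C q * Polynomial.X + Polynomial.C p = 0 := by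
    refine Polynomial.eq_zero_of_dvd_of_degree_lt hmk ?_
    rw [ff_degree]
    exact lt_of_le_of_lt (Polynomial.degree_linear_le) (by norm_num)
  constructor
  · have := congrArg (fun r => Polynomial.coeff r 0) h0
    simpa using this
  · have := congrArg (fun r => Polynomial.coeff r 1) h0
    simpa using this

lemma exists_coords (r : RR F) : ∃ p q : Polynomial F, r = og F p + og F q * xi F := by
  induction r using AdjoinRoot.induction_on with
  | _ g =>
    refine ⟨(g %ₘ ff F).coeff 0, (g %ₘ ff F).coeff 1, ?_⟩
    conv_lhs => rw [← Polynomial.modByMonic_add_div g (ff F)]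
    rw [map_add, map_mul, AdjoinRoot.mk_self, zero_mul, add_zero]
    have hdeg : (g %ₘ ff F).degree ≤ 1 := by
      have h2 : (g %ₘ ff F).degree < 2 := by
        rw [← ff_degree F]; exact Polynomial.degree_modByMonic_lt g (ff_monic F)
      rcases hd : (g %ₘ ff F).degree with _ | n
      · exact bot_le
      · rw [hd] at h2
        rw [show (some n : WithBot ℕ) = (n : WithBot ℕ) from rfl] at h2 ⊢
        have hn : n < 2 := by exact_mod_cast h2
        exact_mod_cast Nat.lt_succ_iff.mp hn
    conv_lhs => rw [Polynomial.eq_X_add_C_of_degree_le_one hdeg]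
    rw [map_add, map_mul, AdjoinRoot.mk_C, AdjoinRoot.mk_C, AdjoinRoot.mk_X]
    ring

lemma mul_coords (p q r s : Polynomial F) :
    (og F p + og F q * xi F) * (og F r + og F s * xi F) =
      og F (p * r + DD F * q * s) + og F (p * s + q * r) * xi F := by
  simp only [map_add, map_mul]
  linear_combination (og F q * og F s) * xi_sq F

noncomputable def nu : Polynomial F →ₐ[F] Polynomial F := Polynomial.aeval (-Polynomial.X)

lemma nu_coeff (p : Polynomial F) (n : ℕ) : (nu F p).coeff n = (-1) ^ n * p.coeff n := by
  induction p using Polynomial.induction_on' with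
  | add p q hp hq => simp only [map_add, Polynomial.coeff_add, hp, hq]; ring
  | monomial m a =>
    have h1 : (nu F) (Polynomial.monomial m a) = Polynomial.C ((-1 : F) ^ m) * Polynomial.monomial m a := by
      rw [nu]
      simp only [AlgHom.coe_mk, Polynomial.aeval_monomial]
      rw [neg_pow, ← Polynomial.C_mul_X_pow_eq_monomial,
        show algebraMap F (Polynomial F) a = Polynomial.C a from rfl,
        show ((-1 : Polynomial F)) ^ m = Polynomial.C ((-1 : F) ^ m) from by
          rw [← Polynomial.C_1, ← Polynomial.C_neg, ← Polynomial.C_pow]]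
      ring
    rw [h1, Polynomial.coeff_C_mul]
    simp only [Polynomial.coeff_monomial]
    split_ifs with hnm
    · subst hnm; rfl
    · simp

lemma nu_X : nu F (Polynomial.X : Polynomial F) = -Polynomial.X := by simp [nu]

lemma nu_DD : nu F (DD F) = DD F := by
  simp only [nu, DD, map_sub, map_one, map_pow, Polynomial.aeval_X]
  ring

lemma odd_natDegree {p : Polynomial F} [CharZero F] (hp : nu F p = -p) (h0 : p ≠ 0) :
    ¬ Even p.natDegree := by
  intro he
  have h := congrArg (fun r => Polynomial.coeff r p.natDegree) hp
  simp only [Polynomial.coeff_neg, nu_coeff, he.neg_one_pow, one_mul] at h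
  have h2 : (2 : F) * p.coeff p.natDegree = 0 := by linear_combination h
  have := (mul_eq_zero.mp h2).resolve_left (by norm_num)
  exact h0 (Polynomial.leadingCoeff_eq_zero.mp this)

lemma even_natDegree {p : Polynomial F} [CharZero F] (hp : nu F p = p) (h0 : p ≠ 0) :
    Even p.natDegree := by
  by_contra he
  rw [Nat.not_even_iff_odd] at he
  have h := congrArg (fun r => Polynomial.coeff r p.natDegree) hp
  simp only [nu_coeff, he.neg_one_pow, neg_one_mul] at h
  have h2 : (2 : F) * p.coeff p.natDegree = 0 := by linear_combination -h
  have := (mul_eq_zero.mp h2).resolve_left (by norm_num)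
  exact h0 (Polynomial.leadingCoeff_eq_zero.mp this)

lemma DD_ne_zero : DD F ≠ 0 := by
  intro h
  have := congrArg (fun r => Polynomial.coeff r 0) h
  simp [DD, Polynomial.coeff_one] at this

lemma DD_natDegree : (DD F).natDegree = 4 := by
  rw [DD, show (1 - Polynomial.X ^ 4 : Polynomial F) = -(Polynomial.X ^ 4 - Polynomial.C 1) from by rw [Polynomial.C_1]; ring,
    Polynomial.natDegree_neg, Polynomial.natDegree_X_pow_sub_C]

lemma no_pell [CharZero F] (p q : Polynomial F) (hp : nu F p = -p) (hq : nu F q = q)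
    (c : F) (hc : c ≠ 0) (h : p ^ 2 - DD F * q ^ 2 = Polynomial.C c) : False := by
  by_cases hp0 : p = 0
  · subst hp0
    by_cases hq0 : q = 0
    · subst hq0
      have hC : (Polynomial.C c : Polynomial F) = 0 := by rw [← h]; ring
      exact hc (by simpa using hC)
    · have hd : ((0 : Polynomial F) ^ 2 - DD F * q ^ 2).natDegree = 4 + 2 * q.natDegree := by
        rw [show ((0 : Polynomial F) ^ 2 - DD F * q ^ 2) = -(DD F * q ^ 2) from by ring,
          Polynomial.natDegree_neg, Polynomial.natDegree_mul (DD_ne_zero F) (pow_ne_zero _ hq0),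
          DD_natDegree, Polynomial.natDegree_pow]
      rw [h, Polynomial.natDegree_C] at hd
      omega
  · by_cases hq0 : q = 0
    · subst hq0
      have hd : (p ^ 2 - DD F * (0 : Polynomial F) ^ 2).natDegree = 2 * p.natDegree := by
        rw [show (p ^ 2 - DD F * (0 : Polynomial F) ^ 2) = p ^ 2 from by ring, Polynomial.natDegree_pow]
      rw [h, Polynomial.natDegree_C] at hd
      exact odd_natDegree F hp hp0 (by rw [show p.natDegree = 0 from by omega]; exact Even.zero)
    · have hodd := odd_natDegree F hp hp0
      have heven := even_natDegree F hq hq0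
      rw [Nat.not_even_iff_odd] at hodd
      obtain ⟨k, hk⟩ := hodd
      obtain ⟨m, hm⟩ := heven
      have hdq : (DD F * q ^ 2).natDegree = 4 + 2 * q.natDegree := by
        rw [Polynomial.natDegree_mul (DD_ne_zero F) (pow_ne_zero _ hq0), DD_natDegree, Polynomial.natDegree_pow]
      have hne : (p ^ 2).natDegree ≠ (DD F * q ^ 2).natDegree := by
        rw [Polynomial.natDegree_pow, hdq]; omega
      rcases lt_or_gt_of_ne hne with hlt | hgt
      · have hh := Polynomial.natDegree_sub_eq_right_of_natDegree_lt hlt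
        rw [h, hdq, Polynomial.natDegree_C] at hh
        omega
      · have hh := Polynomial.natDegree_sub_eq_left_of_natDegree_lt hgt
        rw [h, Polynomial.natDegree_pow, Polynomial.natDegree_C] at hh
        omega

lemma kappa_cond : Polynomial.eval₂ (og F) (-(xi F)) (ff F) = 0 := by
  show Polynomial.eval₂ (og F) (-(xi F)) (Polynomial.X ^ 2 - Polynomial.C (DD F)) = 0
  simp only [Polynomial.eval₂_sub, Polynomial.eval₂_pow, Polynomial.eval₂_X, Polynomial.eval₂_C]
  rw [show (-(xi F)) ^ 2 = xi F ^ 2 from by ring, xi_sq, sub_self]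

noncomputable def kappa : RR F →+* RR F :=
  AdjoinRoot.lift (og F) (-(xi F)) (kappa_cond F)

lemma kappa_coords (p q : Polynomial F) :
    kappa F (og F p + og F q * xi F) = og F p + og F (-q) * xi F := by
  rw [kappa, map_add, map_mul, AdjoinRoot.lift_of, AdjoinRoot.lift_of, AdjoinRoot.lift_root,
    map_neg]
  ring

lemma norm_eq (p q : Polynomial F) :
    (og F p + og F q * xi F) * kappa F (og F p + og F q * xi F) =
      og F (p ^ 2 - DD F * q ^ 2) := by
  rw [kappa_coords, mul_coords,
    show p * (-q) + q * p = 0 from by ring, map_zero, zero_mul, add_zero,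
    show p * p + DD F * q * (-q) = p ^ 2 - DD F * q ^ 2 from by ring]

noncomputable def phi0 : MvPolynomial (Fin 2) F →+* RR F :=
  MvPolynomial.eval₂Hom ((og F).comp (Polynomial.C : F →+* Polynomial F))
    ![xi F, og F Polynomial.X]

lemma phi0_gen : phi0 F (X 0 ^ 2 + X 1 ^ 4 - 1) = 0 := by
  simp only [phi0, map_sub, map_add, map_pow, map_one, eval₂Hom_X']
  show xi F ^ 2 + (og F) Polynomial.X ^ 4 - 1 = 0
  rw [xi_sq, ← map_pow, ← map_add, show DD F + Polynomial.X ^ 4 = 1 from by rw [DD]; ring,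
    map_one, sub_self]

noncomputable def rho : Gam F →+* RR F :=
  Ideal.Quotient.lift _ (phi0 F) (by
    intro a ha
    rw [Ideal.mem_span_singleton] at ha
    obtain ⟨c, rfl⟩ := ha
    rw [map_mul, phi0_gen, zero_mul])

lemma rho_x : rho F (xG F) = xi F := by
  rw [rho, xG, Ideal.Quotient.lift_mk]
  simp [phi0]

lemma rho_y : rho F (yG F) = og F Polynomial.X := by
  rw [rho, yG, Ideal.Quotient.lift_mk]
  simp [phi0]

lemma rho_algebraMap (c : F) :
    rho F (algebraMap F (Gam F) c) = og F (Polynomial.C c) := by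
  rw [show algebraMap F (Gam F) c = Ideal.Quotient.mk _ (MvPolynomial.C c) from rfl,
    rho, Ideal.Quotient.lift_mk]
  simp [phi0]


lemma one_eq : xG F ^ 2 + yG F ^ 4 = 1 := by
  have h : Ideal.Quotient.mk
      (Ideal.span {(X 0 ^ 2 + X 1 ^ 4 - 1 : MvPolynomial (Fin 2) F)})
      (X 0 ^ 2 + X 1 ^ 4 - 1) = 0 :=
    Ideal.Quotient.eq_zero_iff_mem.2 (Ideal.subset_span rfl)
  rw [map_sub, map_add, map_pow, map_pow, map_one, sub_eq_zero] at h
  exact h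


def isEv (r : RR F) : Prop :=
  ∃ p q : Polynomial F, nu F p = p ∧ nu F q = -q ∧ r = og F p + og F q * xi F

def isOd (r : RR F) : Prop :=
  ∃ p q : Polynomial F, nu F p = -p ∧ nu F q = q ∧ r = og F p + og F q * xi F

lemma isEv_mul_isEv {r s : RR F} (hr : isEv F r) (hs : isEv F s) : isEv F (r * s) := by
  obtain ⟨p, q, hp, hq, rfl⟩ := hr
  obtain ⟨u, v, hu, hv, rfl⟩ := hs
  refine ⟨p * u + DD F * q * v, p * v + q * u, ?_, ?_, mul_coords F p q u v⟩
  · rw [map_add, map_mul, map_mul, map_mul, hp, hu, hq, hv, nu_DD]; ring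
  · rw [map_add, map_mul, map_mul, hp, hv, hq, hu]; ring

lemma isEv_mul_isOd {r s : RR F} (hr : isEv F r) (hs : isOd F s) : isOd F (r * s) := by
  obtain ⟨p, q, hp, hq, rfl⟩ := hr
  obtain ⟨u, v, hu, hv, rfl⟩ := hs
  refine ⟨p * u + DD F * q * v, p * v + q * u, ?_, ?_, mul_coords F p q u v⟩
  · rw [map_add, map_mul, map_mul, map_mul, hp, hu, hq, hv, nu_DD]; ring
  · rw [map_add, map_mul, map_mul, hp, hv, hq, hu]; ring

lemma isEv_add {r s : RR F} (hr : isEv F r) (hs : isEv F s) : isEv F (r + s) := by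
  obtain ⟨p, q, hp, hq, rfl⟩ := hr
  obtain ⟨u, v, hu, hv, rfl⟩ := hs
  refine ⟨p + u, q + v, ?_, ?_, by rw [map_add, map_add]; ring⟩
  · rw [map_add, hp, hu]
  · rw [map_add, hq, hv]; ring

lemma isOd_add {r s : RR F} (hr : isOd F r) (hs : isOd F s) : isOd F (r + s) := by
  obtain ⟨p, q, hp, hq, rfl⟩ := hr
  obtain ⟨u, v, hu, hv, rfl⟩ := hs
  refine ⟨p + u, q + v, ?_, ?_, by rw [map_add, map_add]; ring⟩
  · rw [map_add, hp, hu]; ring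
  · rw [map_add, hq, hv]

lemma isOd_zero : isOd F (0 : RR F) :=
  ⟨0, 0, by simp, by simp, by rw [map_zero]; ring⟩

lemma isEv_algebraMap (c : F) : isEv F (og F (Polynomial.C c)) :=
  ⟨Polynomial.C c, 0, by simp [nu], by simp, by rw [map_zero]; ring⟩

lemma rho_even {g : Gam F} (hg : g ∈ AG F) : isEv F (rho F g) := by
  induction hg using Algebra.adjoin_induction with
  | mem u hu =>
    simp only [Set.mem_insert_iff, Set.mem_singleton_iff] at hu
    rcases hu with rfl | rfl
    · rw [map_pow, rho_y, ← map_pow]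
      refine ⟨Polynomial.X ^ 2, 0, ?_, by simp, by rw [map_zero]; ring⟩
      rw [map_pow, nu_X]; ring
    · rw [map_mul, rho_x, rho_y]
      refine ⟨0, Polynomial.X, by simp, nu_X F, by rw [map_zero]; ring⟩
  | algebraMap c => rw [rho_algebraMap]; exact isEv_algebraMap F c
  | add u v hu hv ihu ihv => rw [map_add]; exact isEv_add F ihu ihv
  | mul u v hu hv ihu ihv => rw [map_mul]; exact isEv_mul_isEv F ihu ihv

lemma rho_odd {m : Gam F}
    (hm : m ∈ Submodule.span (AG F) ({xG F, yG F} : Set (Gam F))) :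
    isOd F (rho F m) := by
  induction hm using Submodule.span_induction with
  | mem v hv =>
    simp only [Set.mem_insert_iff, Set.mem_singleton_iff] at hv
    rcases hv with rfl | rfl
    · rw [rho_x]
      exact ⟨0, 1, by simp, map_one _, by rw [map_zero, map_one]; ring⟩
    · rw [rho_y]
      exact ⟨Polynomial.X, 0, nu_X F, by simp, by rw [map_zero]; ring⟩
  | zero => rw [map_zero]; exact isOd_zero F
  | add u v hu hv ihu ihv => rw [map_add]; exact isOd_add F ihu ihv
  | smul a v hv ih =>
    have hav : a • v = (a : Gam F) * v := rfl
    rw [hav, map_mul]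
    exact isEv_mul_isOd F (rho_even F a.2) ih

end Stmt11Aux

/-- The `A`-submodule `M = xA + yA` of `Γ` is not cyclic: there is no `z ∈ M`
with `M = zA`. -/
theorem stmt11 (F : Type*) [Field F] [CharZero F] :
    ¬ ∃ z : Gam F, z ∈ Submodule.span (AG F) ({xG F, yG F} : Set (Gam F)) ∧
      Submodule.span (AG F) ({xG F, yG F} : Set (Gam F)) =
        Submodule.span (AG F) ({z} : Set (Gam F)) := by
  rintro ⟨z, hzM, hspan⟩
  have hxm : xG F ∈ Submodule.span (AG F) ({z} : Set (Gam F)) := by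
    rw [← hspan]; exact Submodule.subset_span (by simp)
  have hym : yG F ∈ Submodule.span (AG F) ({z} : Set (Gam F)) := by
    rw [← hspan]; exact Submodule.subset_span (by simp)
  obtain ⟨a, ha⟩ := Submodule.mem_span_singleton.mp hxm
  obtain ⟨b, hb⟩ := Submodule.mem_span_singleton.mp hym
  have ha' : (a : Gam F) * z = xG F := ha
  have hb' : (b : Gam F) * z = yG F := hb
  obtain ⟨w, hzw⟩ : ∃ w : Gam F, z * w = 1 := by
    refine ⟨(a : Gam F) * (a : Gam F) * z +
      (b : Gam F) * (b : Gam F) * (b : Gam F) * (b : Gam F) * z * z * z, ?_⟩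
    have h1 := Stmt11Aux.one_eq F
    rw [← ha', ← hb'] at h1
    linear_combination h1
  obtain ⟨p, q, hpodd, hqev, hz⟩ := Stmt11Aux.rho_odd F hzM
  obtain ⟨g, h, hw⟩ := Stmt11Aux.exists_coords F (Stmt11Aux.rho F w)
  have hu : Stmt11Aux.rho F z * Stmt11Aux.rho F w = 1 := by
    rw [← map_mul, hzw, map_one]
  have hku : Stmt11Aux.kappa F (Stmt11Aux.rho F z) * Stmt11Aux.kappa F (Stmt11Aux.rho F w) = 1 := by
    rw [← map_mul, hu, map_one]
  have key : Stmt11Aux.og F ((p ^ 2 - Stmt11Aux.DD F * q ^ 2) *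
      (g ^ 2 - Stmt11Aux.DD F * h ^ 2)) = 1 := by
    rw [map_mul, ← Stmt11Aux.norm_eq, ← Stmt11Aux.norm_eq, ← hz, ← hw]
    calc Stmt11Aux.rho F z * Stmt11Aux.kappa F (Stmt11Aux.rho F z) *
          (Stmt11Aux.rho F w * Stmt11Aux.kappa F (Stmt11Aux.rho F w))
        = (Stmt11Aux.rho F z * Stmt11Aux.rho F w) *
          (Stmt11Aux.kappa F (Stmt11Aux.rho F z) * Stmt11Aux.kappa F (Stmt11Aux.rho F w)) := by
          ring
      _ = 1 := by rw [hu, hku, one_mul]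
  have hprod : (p ^ 2 - Stmt11Aux.DD F * q ^ 2) * (g ^ 2 - Stmt11Aux.DD F * h ^ 2) = 1 := by
    have h0 : Stmt11Aux.og F ((p ^ 2 - Stmt11Aux.DD F * q ^ 2) *
        (g ^ 2 - Stmt11Aux.DD F * h ^ 2) - 1) + Stmt11Aux.og F 0 * Stmt11Aux.xi F = 0 := by
      rw [map_sub, map_one, key, map_zero, zero_mul, add_zero, sub_self]
    have := (Stmt11Aux.coords_eq_zero F h0).1
    exact sub_eq_zero.mp this
  have hunit : IsUnit (p ^ 2 - Stmt11Aux.DD F * q ^ 2) := IsUnit.of_mul_eq_one _ hprod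
  obtain ⟨c, hcu, hC⟩ := Polynomial.isUnit_iff.mp hunit
  exact Stmt11Aux.no_pell F p q hpodd hqev c hcu.ne_zero hC.symm
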